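/- Assume ε ∈ {1,−1}, ξ ∉ {0, 1/6}, εξ(1−6ξ) > 0, z is twice differentiable at λ* with z′(λ*) ≠ 0, z(λ*)² = 1/(6εξ(1−6ξ)), 2ξλ*z(λ*) + 1 + w_m ≠ 0, 4ξ/(2ξλ*z(λ*) + 1 + w_m) > 0, and y* = √(4ξ/(2ξλ*z(λ*) + 1 + w_m)). Let J be the 3×3 Jacobian matrix of the vector field F at the point P₂ₐ = (−6ξ·z(λ*), y*, λ*). Then the characteristic polynomial of J equals X·(X − 12ξ)·(X + 12ξ) = X³ − 144ξ²X; in particular the eigenvalues of J are 0, 12ξ and −12ξ, so the fast-roll inflation point is non-hyperbolic. -/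

import Mathlib

open Polynomial Filter

/-- The factor `D(λ) = 1 − 6εξ(1−6ξ)z(λ)²` coming from the time reparametrization. -/
noncomputable def Dfun (ε ξ : ℝ) (z : ℝ → ℝ) (l : ℝ) : ℝ :=
  1 - 6*ε*ξ*(1-6*ξ)*(z l)^2

/-- The common bracket
`B(x,y,λ) = −4/3 − 2ξλy²z(λ) + ε(1−6ξ)(1−w_m)x² + 2εξ(1−3w_m)(x+z(λ))² + (1+w_m)(1−y²)`. -/
noncomputable def Bfun (ε ξ wm : ℝ) (z : ℝ → ℝ) (x y l : ℝ) : ℝ :=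
  -4/3 - 2*ξ*l*y^2*(z l) + ε*(1-6*ξ)*(1-wm)*x^2
    + 2*ε*ξ*(1-3*wm)*(x + z l)^2 + (1+wm)*(1-y^2)

/-- First component of the vector field:
`f₁ = −(x − (ε/2)λy²)·D(λ) + (3/2)(x + 6ξz(λ))·B(x,y,λ)`. -/
noncomputable def f1 (ε ξ wm : ℝ) (z : ℝ → ℝ) (x y l : ℝ) : ℝ :=
  -(x - ε/2*l*y^2) * Dfun ε ξ z l + 3/2*(x + 6*ξ*(z l)) * Bfun ε ξ wm z x y l

/-- Second component: `f₂ = y(2 − (1/2)λx)·D(λ) + (3/2)y·B(x,y,λ)`. -/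
noncomputable def f2 (ε ξ wm : ℝ) (z : ℝ → ℝ) (x y l : ℝ) : ℝ :=
  y*(2 - 1/2*l*x) * Dfun ε ξ z l + 3/2*y * Bfun ε ξ wm z x y l

/-- Third component: `f₃ = x·D(λ)/z′(λ)`. -/
noncomputable def f3 (ε ξ : ℝ) (z : ℝ → ℝ) (x y l : ℝ) : ℝ :=
  x * Dfun ε ξ z l / deriv z l

/-- The full vector field `F(x,y,λ) = (f₁,f₂,f₃)` of the reduced cosmological system. -/
noncomputable def Fvec (ε ξ wm : ℝ) (z : ℝ → ℝ) (x y l : ℝ) : ℝ × ℝ × ℝ :=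
  (f1 ε ξ wm z x y l, f2 ε ξ wm z x y l, f3 ε ξ z x y l)

/-- The effective equation-of-state parameter `w_eff(x,y,λ)`. -/
noncomputable def weff (ε ξ wm : ℝ) (z : ℝ → ℝ) (x y l : ℝ) : ℝ :=
  (Dfun ε ξ z l)⁻¹ *
    (-1 + ε*(1-6*ξ)*(1-wm)*x^2 + 2*ε*ξ*(1-3*wm)*(x + z l)^2
      + (1+wm)*(1-y^2) - 2*ε*ξ*(1-6*ξ)*(z l)^2 - 2*ξ*l*y^2*(z l))

/-- The Jacobian matrix `J_{ij} = ∂f_i/∂(j-th variable)` of `F` at the point `(x,y,λ)`. -/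
noncomputable def Jmat (ε ξ wm : ℝ) (z : ℝ → ℝ) (x y l : ℝ) :
    Matrix (Fin 3) (Fin 3) ℝ :=
  Matrix.of
    ![![deriv (fun t => f1 ε ξ wm z t y l) x,
        deriv (fun t => f1 ε ξ wm z x t l) y,
        deriv (fun t => f1 ε ξ wm z x y t) l],
      ![deriv (fun t => f2 ε ξ wm z t y l) x,
        deriv (fun t => f2 ε ξ wm z x t l) y,
        deriv (fun t => f2 ε ξ wm z x y t) l],
      ![deriv (fun t => f3 ε ξ z t y l) x,
        deriv (fun t => f3 ε ξ z x t l) y,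
        deriv (fun t => f3 ε ξ z x y t) l]]

/-- At the fast-roll inflation point
`P₂ₐ = (−6ξz(λ*), y*, λ*)`, `y* = √(4ξ/(2ξλ*z(λ*)+1+w_m))`, the Jacobian has
characteristic polynomial `X(X − 12ξ)(X + 12ξ) = X³ − 144ξ²X`, hence eigenvalues
`0, 12ξ, −12ξ`: the point is non-hyperbolic. -/

private lemma hasDerivAt_quadratic (a b c x : ℝ) :
    HasDerivAt (fun t => a*t^2 + b*t + c) (a*(2*x) + b) x := by
  have h1 : HasDerivAt (fun t : ℝ => t^2) (2*x) x := by simpa using hasDerivAt_pow 2 x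
  simpa using ((h1.const_mul a).add ((hasDerivAt_id x).const_mul b)).add_const c

private lemma roots_aux (a : ℝ) :
    (X * (X - C a) * (X + C a) : ℝ[X]).roots = {0, a, -a} := by
  have h1 : (X + C a : ℝ[X]) = X - C (-a) := by rw [map_neg, sub_neg_eq_add]
  rw [Polynomial.roots_mul, Polynomial.roots_mul, Polynomial.roots_X, h1,
    Polynomial.roots_X_sub_C, Polynomial.roots_X_sub_C]
  · rfl
  · exact mul_ne_zero X_ne_zero (X_sub_C_ne_zero a)
  · exact mul_ne_zero (mul_ne_zero X_ne_zero (X_sub_C_ne_zero a))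
      (by rw [h1]; exact X_sub_C_ne_zero _)

theorem fastRoll_point_charpoly (ε ξ wm : ℝ) (z : ℝ → ℝ) (lstar : ℝ)
    (hε : ε = 1 ∨ ε = -1) (hξ0 : ξ ≠ 0) (hξ6 : ξ ≠ 1/6)
    (hsign : 0 < ε*ξ*(1-6*ξ))
    (hz1 : ∀ᶠ t in nhds lstar, DifferentiableAt ℝ z t)
    (hz2 : DifferentiableAt ℝ (deriv z) lstar) (hz' : deriv z lstar ≠ 0)
    (hl : (z lstar)^2 = 1/(6*ε*ξ*(1-6*ξ)))
    (hden : 2*ξ*lstar*(z lstar) + 1 + wm ≠ 0)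
    (hpos : 0 < 4*ξ/(2*ξ*lstar*(z lstar) + 1 + wm)) :
    (Jmat ε ξ wm z (-(6*ξ*(z lstar)))
        (Real.sqrt (4*ξ/(2*ξ*lstar*(z lstar) + 1 + wm))) lstar).charpoly
      = X * (X - C (12*ξ)) * (X + C (12*ξ)) ∧
    (Jmat ε ξ wm z (-(6*ξ*(z lstar)))
        (Real.sqrt (4*ξ/(2*ξ*lstar*(z lstar) + 1 + wm))) lstar).charpoly
      = X^3 - C (144*ξ^2) * X ∧
    (Jmat ε ξ wm z (-(6*ξ*(z lstar)))
        (Real.sqrt (4*ξ/(2*ξ*lstar*(z lstar) + 1 + wm))) lstar).charpoly.roots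
      = {0, 12*ξ, -12*ξ} := by

  set z0 : ℝ := z lstar with hz0
  set y0 : ℝ := Real.sqrt (4*ξ/(2*ξ*lstar*z0 + 1 + wm)) with hy0
  set x0 : ℝ := -(6*ξ*z0) with hx0
  -- basic algebraic facts
  have hKpos : (0:ℝ) < 6*(ε*ξ*(1-6*ξ)) := by linarith
  have hKne : 6*ε*ξ*(1-6*ξ) ≠ 0 := by
    have : 6*ε*ξ*(1-6*ξ) = 6*(ε*ξ*(1-6*ξ)) := by ring
    rw [this]; exact ne_of_gt hKpos
  have hK : 6*ε*ξ*(1-6*ξ)*z0^2 = 1 := by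
    rw [hz0, hl]; exact mul_one_div_cancel hKne
  have hD0 : Dfun ε ξ z lstar = 0 := by
    simp only [Dfun]; linear_combination -hK
  have hy2 : y0^2 = 4*ξ/(2*ξ*lstar*z0 + 1 + wm) := Real.sq_sqrt hpos.le
  have hy2' : y0^2*(2*ξ*lstar*z0 + 1 + wm) = 4*ξ := by
    rw [hy2]; exact div_mul_cancel₀ _ hden
  -- derivatives of z
  have hza : HasDerivAt z (deriv z lstar) lstar := hz1.self_of_nhds.hasDerivAt
  -- entry (1,1)
  have hBx : HasDerivAt (fun t => Bfun ε ξ wm z t y0 lstar)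
      ((ε*(1-6*ξ)*(1-wm) + 2*ε*ξ*(1-3*wm))*(2*x0) + 4*ε*ξ*(1-3*wm)*z0) x0 := by
    have hfun : (fun t => Bfun ε ξ wm z t y0 lstar)
        = fun t => (ε*(1-6*ξ)*(1-wm) + 2*ε*ξ*(1-3*wm))*t^2
            + (4*ε*ξ*(1-3*wm)*z0)*t
            + (-4/3 - 2*ξ*lstar*y0^2*z0 + 2*ε*ξ*(1-3*wm)*z0^2 + (1+wm)*(1-y0^2)) := by
      funext t; simp only [Bfun, ← hz0]; ring
    rw [hfun]; exact hasDerivAt_quadratic _ _ _ _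
  have e11 : deriv (fun t => f1 ε ξ wm z t y0 lstar) x0 = 0 := by
    have hfun : (fun t => f1 ε ξ wm z t y0 lstar)
        = fun t => 3/2*((t + 6*ξ*z0) * Bfun ε ξ wm z t y0 lstar) := by
      funext t; simp only [f1, hD0, ← hz0, mul_zero, neg_zero, zero_add]; ring
    have hd : HasDerivAt (fun t => 3/2*((t + 6*ξ*z0) * Bfun ε ξ wm z t y0 lstar))
        (3/2*(1 * Bfun ε ξ wm z x0 y0 lstar + (x0 + 6*ξ*z0) *
          ((ε*(1-6*ξ)*(1-wm) + 2*ε*ξ*(1-3*wm))*(2*x0) + 4*ε*ξ*(1-3*wm)*z0))) x0 :=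
      (((hasDerivAt_id x0).add_const (6*ξ*z0)).mul hBx).const_mul (3/2 : ℝ)
    rw [hfun, hd.deriv]
    simp only [Bfun, ← hz0]
    linear_combination (3/2*(6*ξ*(1-wm) + (1-3*wm)*(1-6*ξ)/3))*hK - (3/2)*hy2'
  -- entry (1,2)
  have e12 : deriv (fun t => f1 ε ξ wm z x0 t lstar) y0 = 0 := by
    have hfun : (fun t => f1 ε ξ wm z x0 t lstar) = fun _ => (0:ℝ) := by
      funext t; simp only [f1, hD0, ← hz0, mul_zero, neg_zero, zero_add]; ring
    rw [hfun, deriv_const]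
  -- entry (2,2)
  have hBy : HasDerivAt (fun t => Bfun ε ξ wm z x0 t lstar)
      ((-2*ξ*lstar*z0 - (1+wm))*(2*y0) + 0) y0 := by
    have hfun : (fun t => Bfun ε ξ wm z x0 t lstar)
        = fun t => (-2*ξ*lstar*z0 - (1+wm))*t^2 + 0*t
            + (-4/3 + ε*(1-6*ξ)*(1-wm)*x0^2 + 2*ε*ξ*(1-3*wm)*(x0+z0)^2 + (1+wm)) := by
      funext t; simp only [Bfun, ← hz0]; ring
    rw [hfun]; exact hasDerivAt_quadratic _ _ _ _
  have e22 : deriv (fun t => f2 ε ξ wm z x0 t lstar) y0 = -(12*ξ) := by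
    have hfun : (fun t => f2 ε ξ wm z x0 t lstar)
        = fun t => 3/2*(t * Bfun ε ξ wm z x0 t lstar) := by
      funext t; simp only [f2, hD0, ← hz0, mul_zero, zero_add]; ring
    have hd : HasDerivAt (fun t => 3/2*(t * Bfun ε ξ wm z x0 t lstar))
        (3/2*(1 * Bfun ε ξ wm z x0 y0 lstar + y0 * ((-2*ξ*lstar*z0 - (1+wm))*(2*y0) + 0))) y0 :=
      ((hasDerivAt_id y0).mul hBy).const_mul (3/2 : ℝ)
    rw [hfun, hd.deriv]
    simp only [Bfun, ← hz0]
    linear_combination (3/2*(6*ξ*(1-wm) + (1-3*wm)*(1-6*ξ)/3))*hK - (9/2)*hy2'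
  -- entry (3,1)
  have e31 : deriv (fun t => f3 ε ξ z t y0 lstar) x0 = 0 := by
    have hfun : (fun t => f3 ε ξ z t y0 lstar) = fun _ => (0:ℝ) := by
      funext t; simp only [f3, hD0, mul_zero, zero_div]
    rw [hfun, deriv_const]
  -- entry (3,2)
  have e32 : deriv (fun t => f3 ε ξ z x0 t lstar) y0 = 0 := by
    have hfun : (fun t => f3 ε ξ z x0 t lstar)
        = fun _ => x0 * Dfun ε ξ z lstar / deriv z lstar := rfl
    rw [hfun, deriv_const]
  -- entry (3,3)
  have hDl : HasDerivAt (fun t => Dfun ε ξ z t)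
      (-((6*ε*ξ*(1-6*ξ)) * (2 * z lstar * deriv z lstar))) lstar := by
    have h2 : HasDerivAt (fun t => (z t)^2) (2 * z lstar * deriv z lstar) lstar := by
      simpa using hza.fun_pow 2
    have h3 := (h2.const_mul (6*ε*ξ*(1-6*ξ))).const_sub 1
    have hfun : (fun t => Dfun ε ξ z t) = fun t => 1 - (6*ε*ξ*(1-6*ξ))*(z t)^2 := by
      funext t; simp only [Dfun]
    rw [hfun]
    convert h3 using 1
  have e33 : deriv (fun t => f3 ε ξ z x0 y0 t) lstar = 12*ξ := by
    have h33 := ((hDl.const_mul x0).div hz2.hasDerivAt hz')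
    have hfun : (fun t => f3 ε ξ z x0 y0 t)
        = fun t => x0 * Dfun ε ξ z t / deriv z t := rfl
    rw [hfun, show (fun t => x0 * Dfun ε ξ z t / deriv z t) = ((fun y => x0 * Dfun ε ξ z y) / deriv z) from rfl, h33.deriv, hD0]
    field_simp
    linear_combination (12*ξ*(deriv z lstar)^2)*hK
  -- assemble the characteristic polynomial
  have hmain : (Jmat ε ξ wm z x0 y0 lstar).charpoly
      = X * (X - C (12*ξ)) * (X + C (12*ξ)) := by
    have hM : Jmat ε ξ wm z x0 y0 lstar = Matrix.of
        ![![0, 0, deriv (fun t => f1 ε ξ wm z x0 y0 t) lstar],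
          ![deriv (fun t => f2 ε ξ wm z t y0 lstar) x0, -(12*ξ),
            deriv (fun t => f2 ε ξ wm z x0 y0 t) lstar],
          ![0, 0, 12*ξ]] := by
      ext i j
      fin_cases i <;> fin_cases j <;>
        simp [Jmat, e11, e12, e22, e31, e32, e33]
    rw [hM, Matrix.charpoly, Matrix.det_fin_three]
    simp [Matrix.charmatrix_apply_eq, Matrix.charmatrix_apply_ne]
    ring
  refine ⟨hmain, ?_, ?_⟩
  · rw [hmain, show (C (144*ξ^2) : ℝ[X]) = C (12*ξ) * C (12*ξ) from by
      rw [← C_mul]; congr 1; ring]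
    ring
  · rw [hmain, roots_aux]
    norm_num
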